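/- Let R > 0 and T_c > 0. There exist ε₁* > 0 and C > 0 (depending only on R and T_c) such that for every ε₁ ∈ (0, ε₁*] and all ρ > 0, u ∈ ℝ³, T > 0 with |ρ − 1| + |u| + |T − T_c| ≤ ε₁, one has |M_{[ρ,u,T]}(v) − μ(v)| ≤ C·ε₁·μ(v)^{5/6} for every v ∈ ℝ³. -/

import Mathlib

open MeasureTheory Real

noncomputable section

/-- Velocity space `ℝ³`. -/
abbrev E3 : Type := EuclideanSpace ℝ (Fin 3)
/-- Local Maxwellian `M_{[ρ,u,T]}(v) = (ρ/(2πRT)^{3/2}) exp(-|v-u|²/(2RT))`. -/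
def maxwellian (R ρ T : ℝ) (u : E3) (v : E3) : ℝ :=
  ρ / (2 * π * R * T) ^ ((3 : ℝ) / 2) * Real.exp (-‖v - u‖ ^ 2 / (2 * R * T))
/-- Global Maxwellian `μ(v) = (2πRT_c)^{-3/2} exp(-|v|²/(2RT_c))`. -/
def muG (R Tc : ℝ) (v : E3) : ℝ :=
  (2 * π * R * Tc) ^ (-(3 : ℝ) / 2) * Real.exp (-‖v‖ ^ 2 / (2 * R * Tc))

lemma mvt_exp_diff (x y : ℝ) (h : x ≤ y) :
    Real.exp (-x) - Real.exp (-y) ≤ (y - x) * Real.exp (-x) := by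
  have h1 : Real.exp (-y) = Real.exp (-x) * Real.exp (x - y) := by
    rw [← Real.exp_add]; ring_nf
  have h2 : 1 - (y - x) ≤ Real.exp (x - y) := by
    have := Real.add_one_le_exp (x - y); linarith
  nlinarith [Real.exp_pos (-x), (Real.exp_pos (x - y)).le]

lemma mvt_exp_abs (A s t m : ℝ) (hA : 0 ≤ A) (hms : m ≤ s) (hmt : m ≤ t) :
    |Real.exp (-(A * s)) - Real.exp (-(A * t))| ≤ A * |s - t| * Real.exp (-(A * m)) := by
  rcases le_total s t with h | h
  · have h1 : A * s ≤ A * t := by nlinarith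
    have h2 : Real.exp (-(A * s)) ≤ Real.exp (-(A * m)) := by
      apply Real.exp_le_exp.mpr; nlinarith
    rw [abs_of_nonneg (by
      have := Real.exp_le_exp.mpr (neg_le_neg h1); linarith)]
    have := mvt_exp_diff (A * s) (A * t) h1
    have habs : |s - t| = t - s := by rw [abs_of_nonpos (by linarith)]; ring
    rw [habs]
    nlinarith [Real.exp_pos (-(A * s))]
  · have h1 : A * t ≤ A * s := by nlinarith
    have h2 : Real.exp (-(A * t)) ≤ Real.exp (-(A * m)) := by
      apply Real.exp_le_exp.mpr; nlinarith
    rw [abs_of_nonpos (by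
      have := Real.exp_le_exp.mpr (neg_le_neg h1); linarith)]
    have := mvt_exp_diff (A * t) (A * s) h1
    have habs : |s - t| = s - t := by rw [abs_of_nonneg (by linarith)]
    rw [habs]
    nlinarith [Real.exp_pos (-(A * t))]

lemma mul_exp_neg_le (a c : ℝ) (hc : 0 < c) :
    a * Real.exp (-(c * a)) ≤ 1 / c := by
  have hxy : Real.exp (-(c * a)) * Real.exp (c * a) = 1 := by
    rw [← Real.exp_add]; simp
  have h := Real.add_one_le_exp (c * a)
  rw [le_div_iff₀ hc]
  nlinarith [mul_nonneg (Real.exp_pos (-(c * a))).le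
    (show (0:ℝ) ≤ Real.exp (c * a) - c * a by linarith)]

lemma poly_exp_bound (x k : ℝ) (hx : 0 ≤ x) (hk : 0 < k) :
    (2 * x + 1) * Real.exp (-(x ^ 2 / (24 * k))) ≤ 24 * k + 2 := by
  have h1 : (24 * k + x ^ 2) / (24 * k) ≤ Real.exp (x ^ 2 / (24 * k)) := by
    have h0 := Real.add_one_le_exp (x ^ 2 / (24 * k))
    have h0' : (24 * k + x ^ 2) / (24 * k) = 1 + x ^ 2 / (24 * k) := by field_simp
    linarith
  have h2 : Real.exp (-(x ^ 2 / (24 * k))) ≤ 24 * k / (24 * k + x ^ 2) := by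
    rw [Real.exp_neg]
    have h3 : (Real.exp (x ^ 2 / (24 * k)))⁻¹ ≤ ((24 * k + x ^ 2) / (24 * k))⁻¹ :=
      inv_anti₀ (by positivity) h1
    rw [inv_div] at h3
    exact h3
  have h4 : (2 * x + 1) * Real.exp (-(x ^ 2 / (24 * k)))
      ≤ (2 * x + 1) * (24 * k / (24 * k + x ^ 2)) :=
    mul_le_mul_of_nonneg_left h2 (by positivity)
  have h5 : (2 * x + 1) * (24 * k / (24 * k + x ^ 2)) ≤ 24 * k + 2 := by
    rw [mul_div_assoc', div_le_iff₀ (by positivity)]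
    nlinarith [sq_nonneg (x - 1)]
  linarith

set_option maxHeartbeats 1000000 in
/-- Mean-value estimate comparing the local and global Maxwellians:
`|M - μ| ≤ C ε₁ μ^{5/6}`. -/
theorem maxwellian_difference_bound (R Tc : ℝ) (hR : 0 < R) (hTc : 0 < Tc) :
    ∃ εs > 0, ∃ C > 0, ∀ ε₁ : ℝ, 0 < ε₁ → ε₁ ≤ εs →
      ∀ (ρ T : ℝ) (u : E3), 0 < ρ → 0 < T →
        |ρ - 1| + ‖u‖ + |T - Tc| ≤ ε₁ →
        ∀ v : E3, |maxwellian R ρ T u v - muG R Tc v| ≤ C * ε₁ * (muG R Tc v) ^ ((5 : ℝ) / 6) := by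
  have hπ := Real.pi_pos
  obtain ⟨k, hk_def⟩ : ∃ x, x = R * Tc := ⟨_, rfl⟩
  have hk : 0 < k := by rw [hk_def]; positivity
  obtain ⟨B, hB_def⟩ : ∃ x, x = 2 * π * R * Tc := ⟨_, rfl⟩
  have hB : 0 < B := by rw [hB_def]; positivity
  obtain ⟨sB, hsB_def⟩ : ∃ x, x = Real.sqrt B := ⟨_, rfl⟩
  have hsB : 0 < sB := by rw [hsB_def]; exact Real.sqrt_pos.mpr hB
  have hsB2 : sB ^ 2 = B := by rw [hsB_def]; exact Real.sq_sqrt hB.le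
  obtain ⟨E6, hE6_def⟩ : ∃ x, x = Real.exp (6 / k) := ⟨_, rfl⟩
  obtain ⟨E11, hE11_def⟩ : ∃ x, x = Real.exp (11 / (2 * k)) := ⟨_, rfl⟩
  have hE6 : 0 < E6 := by rw [hE6_def]; positivity
  have hE11 : 0 < E11 := by rw [hE11_def]; positivity
  obtain ⟨D, hD_def⟩ : ∃ x, x = E6 * (4 + 12 / Tc + 231 / (5 * Tc)) + (24 * k + 2) * E11 / (2 * k) := ⟨_, rfl⟩
  have hD : 0 < D := by rw [hD_def]; positivity
  refine ⟨min 1 (Tc / 20), lt_min one_pos (by positivity), D * B ^ (-(1 : ℝ) / 4),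
    by positivity, ?_⟩
  intro ε₁ hε₁ hεs ρ T u hρ hT hsum v
  have hε1 : ε₁ ≤ 1 := le_trans hεs (min_le_left _ _)
  have hεT : ε₁ ≤ Tc / 20 := le_trans hεs (min_le_right _ _)
  have hρ1 : |ρ - 1| ≤ ε₁ := by
    have h1 := abs_nonneg (T - Tc); have h2 := norm_nonneg u; linarith
  have hu : ‖u‖ ≤ ε₁ := by
    have h1 := abs_nonneg (T - Tc); have h2 := abs_nonneg (ρ - 1); linarith
  have hTT : |T - Tc| ≤ ε₁ := by
    have h1 := abs_nonneg (ρ - 1); have h2 := norm_nonneg u; linarith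
  have hTT' := abs_le.mp (le_trans hTT hεT)
  have hT1 : 19 * Tc / 20 ≤ T := by linarith [hTT'.1]
  have hT2 : T ≤ 21 * Tc / 20 := by linarith [hTT'.2]
  have hu1 : ‖u‖ ≤ 1 := le_trans hu hε1
  obtain ⟨A, hA_def⟩ : ∃ x, x = 2 * π * R * T := ⟨_, rfl⟩
  have hA : 0 < A := by rw [hA_def]; positivity
  obtain ⟨sA, hsA_def⟩ : ∃ x, x = Real.sqrt A := ⟨_, rfl⟩
  have hsA : 0 < sA := by rw [hsA_def]; exact Real.sqrt_pos.mpr hA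
  have hsA2 : sA ^ 2 = A := by rw [hsA_def]; exact Real.sq_sqrt hA.le
  have h2πR : (0:ℝ) < 2 * π * R := by positivity
  have hAB1 : 19 / 20 * B ≤ A := by
    have h := mul_le_mul_of_nonneg_left hT1 h2πR.le
    have h2 : 19 / 20 * B = 2 * π * R * (19 * Tc / 20) := by rw [hB_def]; ring
    rw [h2, hA_def]; exact h
  have hAB2 : A ≤ 21 / 20 * B := by
    have h := mul_le_mul_of_nonneg_left hT2 h2πR.le
    have h2 : 21 / 20 * B = 2 * π * R * (21 * Tc / 20) := by rw [hB_def]; ring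
    rw [h2, hA_def]; exact h
  have hsAB : sA ≤ 2 * sB := by
    have h1 : sA ≤ Real.sqrt (2 ^ 2 * B) := by
      rw [hsA_def]; exact Real.sqrt_le_sqrt (by linarith only [hAB2, hB])
    rw [Real.sqrt_mul (by positivity) B, Real.sqrt_sq (by norm_num : (0:ℝ) ≤ 2), ← hsB_def] at h1
    exact h1
  have hsBA : sB ≤ 2 * sA := by
    have h1 : sB ≤ Real.sqrt (2 ^ 2 * A) := by
      rw [hsB_def]; exact Real.sqrt_le_sqrt (by linarith only [hAB1, hA])
    rw [Real.sqrt_mul (by positivity) A, Real.sqrt_sq (by norm_num : (0:ℝ) ≤ 2), ← hsA_def] at h1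
    exact h1
  obtain ⟨a, ha_def⟩ : ∃ x, x = ‖v - u‖ ^ 2 := ⟨_, rfl⟩
  obtain ⟨b, hb_def⟩ : ∃ x, x = ‖v‖ ^ 2 := ⟨_, rfl⟩
  have ha : 0 ≤ a := by rw [ha_def]; positivity
  have hb : 0 ≤ b := by rw [hb_def]; positivity
  -- geometric inequality
  have hab : 11 / 12 * b - 11 ≤ a := by
    have h0 : v - u + u = v := by abel
    have htri : ‖v‖ ≤ ‖v - u‖ + ‖u‖ := by
      have := norm_add_le (v - u) u
      rw [h0] at this; exact this
    have h1 := mul_self_le_mul_self (norm_nonneg v) htri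
    have h2 := mul_self_le_mul_self (norm_nonneg u) hu1
    rw [ha_def, hb_def]
    linarith only [h1, h2, sq_nonneg (‖v - u‖ - 11 * ‖u‖)]
  have habd : |a - b| ≤ ε₁ * (2 * ‖v‖ + 1) := by
    have hinner : a - b = ‖u‖ ^ 2 - 2 * (inner ℝ v u : ℝ) := by
      rw [ha_def, hb_def, norm_sub_sq_real]; ring
    have hI := abs_le.mp (abs_real_inner_le_norm v u)
    have hm1' := mul_le_mul_of_nonneg_right hu1 (norm_nonneg u)
    have hm2' := mul_le_mul_of_nonneg_left hu (norm_nonneg v)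
    rw [hinner, abs_le]
    constructor
    · linarith only [hI.1, hI.2, hm1', hm2', norm_nonneg u, hu, hε₁,
        mul_self_nonneg ‖u‖]
    · linarith only [hI.1, hI.2, hm1', hm2', norm_nonneg u, hu, hε₁]
  obtain ⟨g, hg_def⟩ : ∃ x, x = Real.exp (-(5 * b / (12 * k))) := ⟨_, rfl⟩
  have hg : 0 < g := by rw [hg_def]; positivity
  -- master exponential bound
  have E1 : ∀ q : ℝ, 5 / (11 * k) ≤ q → q ≤ 10 / (19 * k) →
      Real.exp (-(a * q)) ≤ E6 * g := by
    intro q hq1 hq2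
    rw [hE6_def, hg_def, ← Real.exp_add]
    apply Real.exp_le_exp.mpr
    have hq0 : 0 ≤ q := le_trans (by positivity) hq1
    have e1 : (11 / 12 * b - 11) * q ≤ a * q := mul_le_mul_of_nonneg_right hab hq0
    have e1' : (11 / 12 * b) * q - 11 * q ≤ a * q := by linarith only [e1]
    have e2 : (11 / 12 * b) * (5 / (11 * k)) ≤ (11 / 12 * b) * q :=
      mul_le_mul_of_nonneg_left hq1 (by positivity)
    have e4 : (11 / 12 * b) * (5 / (11 * k)) = 5 * b / (12 * k) := by
      field_simp
    have e5 : (11 : ℝ) * (10 / (19 * k)) ≤ 6 / k := by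
      rw [show (11:ℝ) * (10 / (19 * k)) = 110 / (19 * k) by ring,
        div_le_div_iff₀ (by positivity) (by positivity)]
      linarith only [hk]
    rw [e4] at e2
    have e3 : 11 * q ≤ 11 * (10 / (19 * k)) := by linarith only [hq2]
    linarith only [e1', e2, e3, e5]
  -- positivity facts
  have hAsA : 0 < A * sA := mul_pos hA hsA
  have hBsB : 0 < B * sB := mul_pos hB hsB
  -- rpow to sqrt conversions
  have hA32 : A ^ ((3:ℝ)/2) = A * sA := by
    rw [show (3:ℝ)/2 = 1 + 1/2 by norm_num, Real.rpow_add hA, Real.rpow_one,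
      hsA_def, Real.sqrt_eq_rpow]
  have hB32 : B ^ (-(3:ℝ)/2) = 1 / (B * sB) := by
    rw [show -(3:ℝ)/2 = -(1 + 1/2) by norm_num, Real.rpow_neg hB.le,
      Real.rpow_add hB, Real.rpow_one, hsB_def, Real.sqrt_eq_rpow]
    exact (one_div _).symm
  -- qT bounds
  have hRT2 : R * T ≤ R * (21 * Tc / 20) := mul_le_mul_of_nonneg_left hT2 hR.le
  have hRT1 : R * (19 * Tc / 20) ≤ R * T := mul_le_mul_of_nonneg_left hT1 hR.le
  have hq1 : 5 / (11 * k) ≤ 1 / (2 * R * T) := by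
    rw [div_le_div_iff₀ (by positivity) (by positivity), hk_def]
    linarith only [hRT2, mul_pos hR hTc]
  have hq2 : 1 / (2 * R * T) ≤ 10 / (19 * k) := by
    rw [div_le_div_iff₀ (by positivity) (by positivity), hk_def]
    linarith only [hRT1]
  have h511 : (5:ℝ) / (11 * k) ≤ 10 / (19 * k) := by
    rw [div_le_div_iff₀ (by positivity) (by positivity)]
    linarith only [hk]
  -- unfoldings
  have hM : maxwellian R ρ T u v = ρ * ((1 / (A * sA)) * Real.exp (-(a * (1 / (2 * R * T))))) := by
    simp only [maxwellian]
    rw [← hA_def, hA32,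
      show -‖v - u‖ ^ 2 / (2 * R * T) = -(a * (1 / (2 * R * T))) by rw [ha_def]; ring]
    ring
  have hmu : muG R Tc v = (1 / (B * sB)) * Real.exp (-(b * (1 / (2 * k)))) := by
    simp only [muG]
    rw [← hB_def, hB32,
      show -‖v‖ ^ 2 / (2 * R * Tc) = -(b * (1 / (2 * k))) by rw [hb_def, hk_def]; ring]
  obtain ⟨eA, heA_def⟩ : ∃ x, x = Real.exp (-(a * (1 / (2 * R * T)))) := ⟨_, rfl⟩
  obtain ⟨eA', heA'_def⟩ : ∃ x, x = Real.exp (-(a * (1 / (2 * k)))) := ⟨_, rfl⟩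
  obtain ⟨eB, heB_def⟩ : ∃ x, x = Real.exp (-(b * (1 / (2 * k)))) := ⟨_, rfl⟩
  rw [← heA_def] at hM
  rw [← heB_def] at hmu
  have heA : 0 < eA := by rw [heA_def]; positivity
  have heA' : 0 < eA' := by rw [heA'_def]; positivity
  have heB : 0 < eB := by rw [heB_def]; positivity
  have hEA : eA ≤ E6 * g := by rw [heA_def]; exact E1 _ hq1 hq2
  have hcore : B * sB ≤ 4 * (A * sA) := by
    have h1 : (19 / 20 * B) * (sB / 2) ≤ A * sA :=
      mul_le_mul hAB1 (by linarith only [hsBA]) (by positivity) hA.le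
    linarith only [h1, mul_pos hB hsB]
  -- piece 1
  have hP1 : |(ρ - 1) * ((1 / (A * sA)) * eA)| ≤ ε₁ * (4 * (1 / (B * sB))) * (E6 * g) := by
    rw [abs_mul, abs_of_nonneg (by positivity : (0:ℝ) ≤ 1 / (A * sA) * eA)]
    have hcAB : 1 / (A * sA) ≤ 4 * (1 / (B * sB)) := by
      rw [show (4:ℝ) * (1 / (B * sB)) = 4 / (B * sB) by ring,
        div_le_div_iff₀ (by positivity) (by positivity)]
      linarith only [hcore]
    have h1 : |ρ - 1| * (1 / (A * sA) * eA) ≤ ε₁ * ((4 * (1 / (B * sB))) * (E6 * g)) :=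
      mul_le_mul hρ1 (mul_le_mul hcAB hEA heA.le (by positivity)) (by positivity) hε₁.le
    linarith only [h1]
  -- piece 2
  have hABd : |A - B| ≤ B / Tc * ε₁ := by
    rw [show A - B = (2 * π * R) * (T - Tc) by rw [hA_def, hB_def]; ring, abs_mul,
      abs_of_pos h2πR]
    have h1 : (2 * π * R) * |T - Tc| ≤ (2 * π * R) * ε₁ :=
      mul_le_mul_of_nonneg_left hTT h2πR.le
    have h2 : (2 * π * R) * ε₁ = B / Tc * ε₁ := by
      rw [hB_def]; field_simp
    linarith only [h1, h2]
  have hkey : |B * sB - A * sA| ≤ 3 * sB * |A - B| := by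
    rw [abs_le]
    constructor
    · -- lower bound : -(3 sB |A-B|) ≤ B sB - A sA
      rcases le_total A B with h | h
      · have hss : sA ≤ sB := by
          rw [hsA_def, hsB_def]; exact Real.sqrt_le_sqrt h
        have habs : |A - B| = B - A := by rw [abs_of_nonpos (by linarith only [h])]; ring
        rw [habs, ← hsA2, ← hsB2]
        have hh1 : 0 ≤ (sB - sA) * (sA ^ 2 + sA * sB + sB ^ 2) :=
          mul_nonneg (by linarith only [hss]) (by positivity)
        have hh2 : 0 ≤ sB * (sB ^ 2 - sA ^ 2) := by
          have u1 := mul_le_mul_of_nonneg_right hss hsA.le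
          have u2 := mul_le_mul_of_nonneg_right hss hsB.le
          exact mul_nonneg hsB.le (by linarith only [u1, u2])
        linarith only [hh1, hh2]
      · have hss : sB ≤ sA := by
          rw [hsA_def, hsB_def]; exact Real.sqrt_le_sqrt h
        have habs : |A - B| = A - B := abs_of_nonneg (by linarith only [h])
        rw [habs, ← hsA2, ← hsB2]
        have hin : 0 ≤ 2 * sA * sB + 2 * sB ^ 2 - sA ^ 2 := by
          have h7 := mul_le_mul_of_nonneg_right hsAB hsA.le
          linarith only [h7, sq_nonneg sB]
        have hh : 0 ≤ (sA - sB) * (2 * sA * sB + 2 * sB ^ 2 - sA ^ 2) :=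
          mul_nonneg (by linarith only [hss]) hin
        linarith only [hh]
    · -- upper bound : B sB - A sA ≤ 3 sB |A-B|
      rcases le_total A B with h | h
      · have hss : sA ≤ sB := by
          rw [hsA_def, hsB_def]; exact Real.sqrt_le_sqrt h
        have habs : |A - B| = B - A := by rw [abs_of_nonpos (by linarith only [h])]; ring
        rw [habs, ← hsA2, ← hsB2]
        have hin : 0 ≤ 2 * sB ^ 2 + 2 * sA * sB - sA ^ 2 := by
          have u1 := mul_le_mul_of_nonneg_right hss hsA.le
          linarith only [u1, sq_nonneg sB, mul_nonneg hsA.le hsB.le]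
        have hh : 0 ≤ (sB - sA) * (2 * sB ^ 2 + 2 * sA * sB - sA ^ 2) :=
          mul_nonneg (by linarith only [hss]) hin
        linarith only [hh]
      · have hss : sB ≤ sA := by
          rw [hsA_def, hsB_def]; exact Real.sqrt_le_sqrt h
        have habs : |A - B| = A - B := abs_of_nonneg (by linarith only [h])
        rw [habs, ← hsA2, ← hsB2]
        have hh1 : 0 ≤ (sA - sB) * (sA ^ 2 + sA * sB + sB ^ 2) :=
          mul_nonneg (by linarith only [hss]) (by positivity)
        have hh2 : 0 ≤ sB * (sA ^ 2 - sB ^ 2) := by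
          have u1 := mul_le_mul_of_nonneg_right hss hsB.le
          have u2 := mul_le_mul_of_nonneg_right hss hsA.le
          exact mul_nonneg hsB.le (by linarith only [u1, u2])
        linarith only [hh1, hh2]
  have hP2 : |(1 / (A * sA) - 1 / (B * sB)) * eA| ≤
      (12 * ε₁ / Tc * (1 / (B * sB))) * (E6 * g) := by
    rw [abs_mul, abs_of_pos heA]
    have hform : 1 / (A * sA) - 1 / (B * sB) = (B * sB - A * sA) / ((A * sA) * (B * sB)) := by
      field_simp
    have hcABd : |1 / (A * sA) - 1 / (B * sB)| ≤ 12 * ε₁ / Tc * (1 / (B * sB)) := by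
      rw [hform, abs_div, abs_of_pos (by positivity : (0:ℝ) < A * sA * (B * sB)),
        div_le_iff₀ (by positivity)]
      have hrhs : 12 * ε₁ / Tc * (1 / (B * sB)) * (A * sA * (B * sB)) =
          12 * ε₁ / Tc * (A * sA) := by
        field_simp
      rw [hrhs]
      have hfin : 3 * sB * (B / Tc * ε₁) ≤ 12 * ε₁ / Tc * (A * sA) := by
        have h9 : 3 * (B * sB) * (ε₁ / Tc) ≤ 12 * (A * sA) * (ε₁ / Tc) :=
          mul_le_mul_of_nonneg_right (by linarith only [hcore]) (by positivity)
        have e1 : 3 * sB * (B / Tc * ε₁) = 3 * (B * sB) * (ε₁ / Tc) := by ring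
        have e2 : 12 * ε₁ / Tc * (A * sA) = 12 * (A * sA) * (ε₁ / Tc) := by ring
        rw [e1, e2]; exact h9
      have hmid : 3 * sB * |A - B| ≤ 3 * sB * (B / Tc * ε₁) :=
        mul_le_mul_of_nonneg_left hABd (by positivity)
      linarith only [hkey, hmid, hfin]
    exact mul_le_mul_of_nonneg_right hcABd heA.le |>.trans
      (mul_le_mul_of_nonneg_left hEA (by positivity))
  -- piece 3
  have hqd : |1 / (2 * R * T) - 1 / (2 * k)| ≤ ε₁ / (k * Tc) := by
    have heq : 1 / (2 * R * T) - 1 / (2 * k) = (Tc - T) / (2 * T * k) := by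
      rw [hk_def]; field_simp
    rw [heq, abs_div, abs_of_pos (by positivity : (0:ℝ) < 2 * T * k)]
    apply div_le_div₀ hε₁.le (by rw [abs_sub_comm]; exact hTT) (by positivity)
    have h9 := mul_le_mul_of_nonneg_right hT1 hk.le
    have h10 := mul_pos hTc hk
    linarith only [h9, h10]
  have hm1 : 10 / (21 * k) ≤ 1 / (2 * R * T) := by
    rw [div_le_div_iff₀ (by positivity) (by positivity), hk_def]
    linarith only [hRT2]
  have hm2 : (10:ℝ) / (21 * k) ≤ 1 / (2 * k) := by
    rw [div_le_div_iff₀ (by positivity) (by positivity)]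
    linarith only [hk]
  have hP3 : |(1 / (B * sB)) * (eA - eA')| ≤
      (1 / (B * sB)) * ((ε₁ / (k * Tc)) * (231 * k / 5) * (E6 * g)) := by
    rw [abs_mul, abs_of_pos (by positivity : (0:ℝ) < 1 / (B * sB))]
    apply mul_le_mul_of_nonneg_left _ (by positivity)
    have h3 := mvt_exp_abs a (1 / (2 * R * T)) (1 / (2 * k)) (10 / (21 * k)) ha hm1 hm2
    rw [← heA_def, ← heA'_def] at h3
    have hsplitexp : Real.exp (-(a * (10 / (21 * k)))) =
        Real.exp (-(a * (5 / (231 * k)))) * Real.exp (-(a * (5 / (11 * k)))) := by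
      rw [← Real.exp_add]; congr 1; ring
    rw [hsplitexp] at h3
    have f2 : a * Real.exp (-(a * (5 / (231 * k)))) ≤ 231 * k / 5 := by
      have h5 := mul_exp_neg_le a (5 / (231 * k)) (by positivity)
      rw [show (5 / (231 * k)) * a = a * (5 / (231 * k)) by ring, one_div_div] at h5
      exact h5
    have f3 : Real.exp (-(a * (5 / (11 * k)))) ≤ E6 * g := E1 _ le_rfl h511
    have hre : a * |1 / (2 * R * T) - 1 / (2 * k)| *
        (Real.exp (-(a * (5 / (231 * k)))) * Real.exp (-(a * (5 / (11 * k))))) =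
        |1 / (2 * R * T) - 1 / (2 * k)| * (a * Real.exp (-(a * (5 / (231 * k))))) *
        Real.exp (-(a * (5 / (11 * k)))) := by ring
    rw [hre] at h3
    have hfinal : |1 / (2 * R * T) - 1 / (2 * k)| * (a * Real.exp (-(a * (5 / (231 * k))))) *
        Real.exp (-(a * (5 / (11 * k)))) ≤ (ε₁ / (k * Tc)) * (231 * k / 5) * (E6 * g) := by
      apply mul_le_mul _ f3 (Real.exp_pos _).le (by positivity)
      exact mul_le_mul hqd f2 (by positivity) (by positivity)
    linarith only [h3, hfinal]
  -- piece 4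
  have hmb : 11 / 12 * b - 11 ≤ b := by linarith only [hb]
  have hP4 : |(1 / (B * sB)) * (eA' - eB)| ≤
      (1 / (B * sB)) * ((1 / (2 * k)) * E11 * (ε₁ * (24 * k + 2)) * g) := by
    rw [abs_mul, abs_of_pos (by positivity : (0:ℝ) < 1 / (B * sB))]
    apply mul_le_mul_of_nonneg_left _ (by positivity)
    have h4 := mvt_exp_abs (1 / (2 * k)) a b (11 / 12 * b - 11) (by positivity) hab hmb
    rw [show (1 / (2 * k)) * a = a * (1 / (2 * k)) by ring,
      show (1 / (2 * k)) * b = b * (1 / (2 * k)) by ring, ← heA'_def, ← heB_def] at h4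
    have hsplit4 : Real.exp (-(1 / (2 * k) * (11 / 12 * b - 11))) =
        E11 * (Real.exp (-(b / (24 * k))) * g) := by
      rw [hE11_def, hg_def, ← Real.exp_add, ← Real.exp_add]; congr 1; ring
    rw [hsplit4] at h4
    have hpoly : (2 * ‖v‖ + 1) * Real.exp (-(b / (24 * k))) ≤ 24 * k + 2 := by
      have hp := poly_exp_bound ‖v‖ k (norm_nonneg v) hk
      rw [show ‖v‖ ^ 2 / (24 * k) = b / (24 * k) by rw [hb_def]] at hp
      exact hp
    have habd2 : |a - b| * Real.exp (-(b / (24 * k))) ≤ ε₁ * (24 * k + 2) := by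
      have s1 : |a - b| * Real.exp (-(b / (24 * k))) ≤
          (ε₁ * (2 * ‖v‖ + 1)) * Real.exp (-(b / (24 * k))) :=
        mul_le_mul_of_nonneg_right habd (Real.exp_pos _).le
      have s2 : (ε₁ * (2 * ‖v‖ + 1)) * Real.exp (-(b / (24 * k))) =
          ε₁ * ((2 * ‖v‖ + 1) * Real.exp (-(b / (24 * k)))) := by ring
      have s3 : ε₁ * ((2 * ‖v‖ + 1) * Real.exp (-(b / (24 * k)))) ≤ ε₁ * (24 * k + 2) :=
        mul_le_mul_of_nonneg_left hpoly hε₁.le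
      rw [s2] at s1
      linarith only [s1, s3]
    have hre : 1 / (2 * k) * |a - b| * (E11 * (Real.exp (-(b / (24 * k))) * g)) =
        1 / (2 * k) * E11 * (|a - b| * Real.exp (-(b / (24 * k)))) * g := by ring
    rw [hre] at h4
    have hfinal : 1 / (2 * k) * E11 * (|a - b| * Real.exp (-(b / (24 * k)))) * g ≤
        1 / (2 * k) * E11 * (ε₁ * (24 * k + 2)) * g := by
      apply mul_le_mul_of_nonneg_right _ hg.le
      exact mul_le_mul_of_nonneg_left habd2 (by positivity)
    linarith only [h4, hfinal]
  -- assemble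
  have key : |maxwellian R ρ T u v - muG R Tc v| ≤ D / (B * sB) * ε₁ * g := by
    rw [hM, hmu]
    have hsplit : ρ * (1 / (A * sA) * eA) - 1 / (B * sB) * eB =
        (ρ - 1) * (1 / (A * sA) * eA) + (1 / (A * sA) - 1 / (B * sB)) * eA +
        (1 / (B * sB)) * (eA - eA') + (1 / (B * sB)) * (eA' - eB) := by ring
    rw [hsplit]
    have t1 := abs_add_le ((ρ - 1) * (1 / (A * sA) * eA) + (1 / (A * sA) - 1 / (B * sB)) * eA +
      (1 / (B * sB)) * (eA - eA')) ((1 / (B * sB)) * (eA' - eB))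
    have t2 := abs_add_le ((ρ - 1) * (1 / (A * sA) * eA) + (1 / (A * sA) - 1 / (B * sB)) * eA)
      ((1 / (B * sB)) * (eA - eA'))
    have t3 := abs_add_le ((ρ - 1) * (1 / (A * sA) * eA)) ((1 / (A * sA) - 1 / (B * sB)) * eA)
    have htotal : ε₁ * (4 * (1 / (B * sB))) * (E6 * g) +
        (12 * ε₁ / Tc * (1 / (B * sB))) * (E6 * g) +
        (1 / (B * sB)) * ((ε₁ / (k * Tc)) * (231 * k / 5) * (E6 * g)) +
        (1 / (B * sB)) * ((1 / (2 * k)) * E11 * (ε₁ * (24 * k + 2)) * g) =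
        D / (B * sB) * ε₁ * g := by
      rw [hD_def]
      field_simp [hTc.ne', hk.ne', hB.ne', hsB.ne']
    linarith only [t1, t2, t3, hP1, hP2, hP3, hP4, htotal]
  -- convert to the stated form
  have hμ56 : (muG R Tc v) ^ ((5:ℝ)/6) = B ^ (-(5:ℝ)/4) * g := by
    simp only [muG]
    rw [← hB_def, Real.mul_rpow (Real.rpow_nonneg hB.le _) (Real.exp_pos _).le]
    congr 1
    · rw [← Real.rpow_mul hB.le]; norm_num
    · rw [← Real.exp_mul, hg_def]; congr 1; rw [hb_def, hk_def]; ring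
  have hBsplit : 1 / (B * sB) = B ^ (-(1:ℝ)/4) * B ^ (-(5:ℝ)/4) := by
    rw [← hB32, ← Real.rpow_add hB]; norm_num
  have hfin : D * B ^ (-(1:ℝ)/4) * ε₁ * (B ^ (-(5:ℝ)/4) * g) = D / (B * sB) * ε₁ * g := by
    have e1 : D / (B * sB) = D * (1 / (B * sB)) := by ring
    rw [e1, hBsplit]; ring
  rw [hμ56, hfin]
  exact key
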